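/- Let $A_0$ and $A_1$ be two classes of continuous distribution functions with $x^*=+\infty$, and suppose there is a continuous separating distribution function $F_0$ with $x^*_{F_0}=+\infty$ such that $B(G,F_0)$ holds for every $G\in A_0$ and $B(F_0,H)$ holds for every $H\in A_1$ (possibly with different constants $\varepsilon$, $x_0$). Consider the test that rejects $\tilde H_0: F\in A_0$ whenever $R_{k,n}>1+u_{1-\alpha}/\sqrt{k}$, where $u_{1-\alpha}$ is the $(1-\alpha)$-quantile of the standard normal distribution. If $k=k(n)\to\infty$ and $k/n\to 0$, then: (a) for every $F\in A_0$ the probability of rejection tends to $0$ (in particular the test has asymptotic significance level $\alpha$); (b) for every $F\in A_1$ the probability of rejection tends to $1$ (the test is consistent). -/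

import Mathlib

open MeasureTheory ProbabilityTheory Filter Set

noncomputable def orderStat (n : ℕ) (x : ℕ → ℝ) (i : ℕ) : ℝ :=
  if h : i < n then x ((Tuple.sort (fun j : Fin n => x j)) ⟨i, h⟩) else 0

noncomputable def Rstat (F0 : ℝ → ℝ) (n k : ℕ) (x : ℕ → ℝ) : ℝ :=
  Real.log (1 - F0 (orderStat n x (n - k - 1)))
    - (1 / (k : ℝ)) * ∑ i ∈ Finset.range k, Real.log (1 - F0 (orderStat n x (n - k + i)))

/-- The B-condition `B(H, G)`: for some `ε ∈ (0,1)` and `x₀`, the function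
`(1 - H x)^(1-ε) / (1 - G x)` is nonincreasing for `x > x₀`. -/
def BCondition (H G : ℝ → ℝ) : Prop :=
  ∃ ε x0 : ℝ, 0 < ε ∧ ε < 1 ∧
    AntitoneOn (fun x => (1 - H x) ^ (1 - ε) / (1 - G x)) (Set.Ioi x0)

set_option linter.unusedSectionVars false
set_option linter.unusedVariables false
set_option maxHeartbeats 1000000


namespace OSaux
variable {n : ℕ} (x : ℕ → ℝ)

lemma orderStat_eq {i : ℕ} (h : i < n) :
    orderStat n x i = x ((Tuple.sort (fun j : Fin n => x j)) ⟨i, h⟩) := dif_pos h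

lemma orderStat_mono {i j : ℕ} (hij : i ≤ j) (hj : j < n) :
    orderStat n x i ≤ orderStat n x j := by
  have hi : i < n := lt_of_le_of_lt hij hj
  rw [orderStat_eq x hi, orderStat_eq x hj]
  exact Tuple.monotone_sort (fun j : Fin n => x j)
    (show (⟨i, hi⟩ : Fin n) ≤ ⟨j, hj⟩ from hij)

lemma sum_orderStat (f : ℝ → ℝ) :
    ∑ p ∈ Finset.range n, f (orderStat n x p) = ∑ i ∈ Finset.range n, f (x i) := by
  rw [Finset.sum_range (fun p => f (orderStat n x p)), Finset.sum_range (fun i => f (x i))]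
  rw [← Equiv.sum_comp (Tuple.sort (fun j : Fin n => x j)) (fun i : Fin n => f (x i))]
  refine Finset.sum_congr rfl fun p _ => ?_
  rw [orderStat_eq x p.isLt]

lemma card_filter_eq (P : ℝ → Prop) [DecidablePred P] :
    ((Finset.range n).filter fun i => P (x i)).card
      = (Finset.univ.filter fun p : Fin n => P (orderStat n x p)).card := by
  classical
  rw [Finset.card_filter, Finset.card_filter]
  rw [Finset.sum_range (fun i => if P (x i) then 1 else 0)]
  rw [← Equiv.sum_comp (Tuple.sort (fun j : Fin n => x j)) (fun i : Fin n => if P (x i) then 1 else 0)]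
  refine Finset.sum_congr rfl fun p _ => ?_
  rw [orderStat_eq x p.isLt]

lemma orderStat_prop_iff (P : ℝ → Prop) [DecidablePred P]
    (hP : ∀ a b : ℝ, a ≤ b → P b → P a) {j : ℕ} (hj : j < n) :
    P (orderStat n x j) ↔ j + 1 ≤ ((Finset.range n).filter fun i => P (x i)).card := by
  rw [card_filter_eq]
  constructor
  · intro h
    have hsub : (Finset.Iic (⟨j, hj⟩ : Fin n)) ⊆
        Finset.univ.filter fun p : Fin n => P (orderStat n x p) := by
      intro p hp
      simp only [Finset.mem_Iic, Fin.le_def] at hp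
      simp only [Finset.mem_filter, Finset.mem_univ, true_and]
      exact hP _ _ (orderStat_mono x hp hj) h
    have := Finset.card_le_card hsub
    rwa [Fin.card_Iic] at this
  · intro hcard
    by_contra h
    have hsub : (Finset.univ.filter fun p : Fin n => P (orderStat n x p)) ⊆
        Finset.Iio (⟨j, hj⟩ : Fin n) := by
      intro p hp
      simp only [Finset.mem_filter, Finset.mem_univ, true_and] at hp
      simp only [Finset.mem_Iio, Fin.lt_def]
      by_contra hpj
      push_neg at hpj
      exact h (hP _ _ (orderStat_mono x hpj p.isLt) hp)
    have := Finset.card_le_card hsub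
    simp only [Fin.card_Iio, Fin.val_mk] at this
    omega

end OSaux

section Dist
variable {Ω : Type} [MeasurableSpace Ω] (P : Measure Ω) [IsProbabilityMeasure P]
  {F : ℝ → ℝ}

noncomputable def gfun (F : ℝ → ℝ) : ℝ → ℝ := fun z => -Real.log (1 - F z)

lemma F_nonneg (hFm : Monotone F) (hFb : Tendsto F atBot (nhds 0)) (x : ℝ) : 0 ≤ F x :=
  le_of_tendsto hFb (by filter_upwards [eventually_le_atBot x] with y hy using hFm hy)

lemma gfun_mono (hFm : Monotone F) (hFlt : ∀ x, F x < 1) : Monotone (gfun F) := by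
  intro a b hab
  have h1 : (0:ℝ) < 1 - F b := by linarith [hFlt b]
  have := Real.log_le_log h1 (by linarith [hFm hab] : 1 - F b ≤ 1 - F a)
  simp only [gfun, neg_le_neg_iff]
  linarith

lemma gfun_cont (hFc : Continuous F) (hFlt : ∀ x, F x < 1) : Continuous (gfun F) := by
  apply Continuous.neg
  exact (continuous_const.sub hFc).log (fun x => by have := hFlt x; intro h; simp only [Pi.sub_apply] at h; linarith)

lemma gtail (hFc : Continuous F) (hFm : Monotone F) (hFb : Tendsto F atBot (nhds 0))
    (hFt : Tendsto F atTop (nhds 1)) (hFlt : ∀ x, F x < 1)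
    {Z : Ω → ℝ} (hZ : Measurable Z) (hcdf : ∀ x, P {ω | Z ω ≤ x} = ENNReal.ofReal (F x))
    {t : ℝ} (ht : 0 < t) :
    P {ω | t < gfun F (Z ω)} = ENNReal.ofReal (Real.exp (-t)) := by
  set s : ℝ := 1 - Real.exp (-t) with hs_def
  have hexp1 : Real.exp (-t) < 1 := by
    rw [Real.exp_lt_one_iff]; linarith
  have hs0 : 0 < s := by simp only [hs_def, sub_pos]; exact hexp1
  have hs1 : s < 1 := by have := Real.exp_pos (-t); simp only [hs_def]; linarith
  -- the set A = {z | F z ≤ s}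
  set A : Set ℝ := {z | F z ≤ s} with hA_def
  obtain ⟨a0, ha0⟩ : ∃ a0, F a0 < s := (hFb.eventually_lt_const hs0).exists
  obtain ⟨b0, hb0⟩ : ∃ b0, s < F b0 := (hFt.eventually_const_lt hs1).exists
  have hne : A.Nonempty := ⟨a0, le_of_lt ha0⟩
  have hbdd : BddAbove A := by
    refine ⟨b0, fun z hz => ?_⟩
    by_contra hzb
    push_neg at hzb
    exact absurd (le_trans (hFm hzb.le) hz) (not_le.2 hb0)
  have hAclosed : IsClosed A := IsClosed.preimage hFc isClosed_Iic
  set xs : ℝ := sSup A with hxs_def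
  have hxsA : xs ∈ A := hAclosed.csSup_mem hne hbdd
  have hFxs_le : F xs ≤ s := hxsA
  have hFxs : F xs = s := by
    refine le_antisymm hFxs_le ?_
    have hab : a0 ≤ b0 := by
      by_contra hba
      push_neg at hba
      exact absurd (hFm hba.le) (not_le.2 (lt_trans ha0 hb0))
    have := intermediate_value_Icc hab hFc.continuousOn
    have hmem : s ∈ Icc (F a0) (F b0) := ⟨ha0.le, hb0.le⟩
    obtain ⟨c, _, hc⟩ := this hmem
    have : c ≤ xs := le_csSup hbdd (by simp [hA_def, hc.le])
    calc s = F c := hc.symm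
    _ ≤ F xs := hFm this
  have hset : ∀ z : ℝ, (F z ≤ s ↔ z ≤ xs) := by
    intro z
    constructor
    · intro h; exact le_csSup hbdd h
    · intro h; calc F z ≤ F xs := hFm h
        _ = s := hFxs
  have hseteq : {ω | t < gfun F (Z ω)} = {ω | Z ω ≤ xs}ᶜ := by
    ext ω
    simp only [mem_setOf_eq, mem_compl_iff, ← hset (Z ω)]
    have hpos : (0:ℝ) < 1 - F (Z ω) := by linarith [hFlt (Z ω)]
    rw [gfun]
    constructor
    · intro h
      have : Real.log (1 - F (Z ω)) < -t := by linarith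
      rw [Real.log_lt_iff_lt_exp hpos] at this
      simp only [hs_def]; intro habs; linarith
    · intro h
      push_neg at h
      have h2 : 1 - F (Z ω) < Real.exp (-t) := by simp only [hs_def] at h; linarith
      have := (Real.log_lt_iff_lt_exp hpos).2 h2
      linarith
  rw [hseteq]
  have hmeas : MeasurableSet {ω | Z ω ≤ xs} := hZ measurableSet_Iic
  rw [measure_compl hmeas (measure_ne_top _ _), hcdf xs, hFxs]
  rw [measure_univ]
  rw [← ENNReal.ofReal_one, ← ENNReal.ofReal_sub _ hs0.le]
  congr 1
  simp [hs_def]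

end Dist


lemma exp_neg_lint : ∫⁻ s in Ioi (0:ℝ), ENNReal.ofReal (Real.exp (-s)) = 1 := by
  have hint : IntegrableOn (fun s : ℝ => Real.exp (-s)) (Ioi 0) := by
    simpa using exp_neg_integrableOn_Ioi 0 one_pos
  rw [← ofReal_integral_eq_lintegral_ofReal hint
    (ae_of_all _ fun s => (Real.exp_pos _).le)]
  rw [integral_exp_neg_Ioi_zero, ENNReal.ofReal_one]

lemma s_exp_neg_lint : ∫⁻ s in Ioi (0:ℝ), ENNReal.ofReal (Real.exp (-s) * s) = 1 := by
  have hint : IntegrableOn (fun s : ℝ => Real.exp (-s) * s) (Ioi 0) := by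
    have := Real.GammaIntegral_convergent (by norm_num : (0:ℝ) < 2)
    apply this.congr_fun ?_ measurableSet_Ioi
    intro s hs
    norm_num [Real.rpow_one]
  rw [← ofReal_integral_eq_lintegral_ofReal hint ?_]
  · have h1 : ∫ s in Ioi (0:ℝ), Real.exp (-s) * s = Real.Gamma 2 := by
      rw [Real.Gamma_eq_integral (by norm_num : (0:ℝ) < 2)]
      apply setIntegral_congr_fun measurableSet_Ioi
      intro s hs
      norm_num [Real.rpow_one]
    have h2 : Real.Gamma 2 = 1 := by simpa using Real.Gamma_nat_eq_factorial 1
    rw [h1, h2, ENNReal.ofReal_one]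
  · filter_upwards [self_mem_ae_restrict measurableSet_Ioi] with s hs
    exact mul_nonneg (Real.exp_pos _).le (le_of_lt hs)

section Moments
variable {Ω : Type} [MeasurableSpace Ω] (P : Measure Ω) [IsProbabilityMeasure P]
  {W : Ω → ℝ} {t : ℝ}

lemma Wlint (ht : 0 ≤ t) (hWnn : ∀ ω, 0 ≤ W ω) (hW : Measurable W)
    (htail : ∀ s : ℝ, 0 < s → P {ω | s < W ω} = ENNReal.ofReal (Real.exp (-(t + s)))) :
    ∫⁻ ω, ENNReal.ofReal (W ω) ∂P = ENNReal.ofReal (Real.exp (-t)) := by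
  rw [lintegral_eq_lintegral_meas_lt P (ae_of_all _ hWnn) hW.aemeasurable]
  calc ∫⁻ s in Ioi (0:ℝ), P {ω | s < W ω}
      = ∫⁻ s in Ioi (0:ℝ), ENNReal.ofReal (Real.exp (-t)) * ENNReal.ofReal (Real.exp (-s)) := by
        apply setLIntegral_congr_fun measurableSet_Ioi
        intro s hs
        dsimp only
        rw [htail s hs, ← ENNReal.ofReal_mul (Real.exp_pos _).le, ← Real.exp_add]
        ring_nf
    _ = ENNReal.ofReal (Real.exp (-t)) := by
        rw [lintegral_const_mul' _ _ ENNReal.ofReal_ne_top, exp_neg_lint, mul_one]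

lemma Wintegrable (ht : 0 ≤ t) (hWnn : ∀ ω, 0 ≤ W ω) (hW : Measurable W)
    (htail : ∀ s : ℝ, 0 < s → P {ω | s < W ω} = ENNReal.ofReal (Real.exp (-(t + s)))) :
    Integrable W P := by
  refine ⟨hW.aestronglyMeasurable, ?_⟩
  rw [hasFiniteIntegral_iff_ofReal (ae_of_all _ hWnn), Wlint P ht hWnn hW htail]
  exact ENNReal.ofReal_lt_top

lemma Wmean (ht : 0 ≤ t) (hWnn : ∀ ω, 0 ≤ W ω) (hW : Measurable W)
    (htail : ∀ s : ℝ, 0 < s → P {ω | s < W ω} = ENNReal.ofReal (Real.exp (-(t + s)))) :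
    ∫ ω, W ω ∂P = Real.exp (-t) := by
  rw [integral_eq_lintegral_of_nonneg_ae (ae_of_all _ hWnn) hW.aestronglyMeasurable]
  rw [Wlint P ht hWnn hW htail, ENNReal.toReal_ofReal (Real.exp_pos _).le]

lemma Wsq_lint (ht : 0 ≤ t) (hWnn : ∀ ω, 0 ≤ W ω) (hW : Measurable W)
    (htail : ∀ s : ℝ, 0 < s → P {ω | s < W ω} = ENNReal.ofReal (Real.exp (-(t + s)))) :
    ∫⁻ ω, ENNReal.ofReal (W ω ^ 2) ∂P = ENNReal.ofReal 2 * ENNReal.ofReal (Real.exp (-t)) := by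
  have key := lintegral_comp_eq_lintegral_meas_lt_mul P (g := fun s => 2 * s)
    (ae_of_all _ hWnn) hW.aemeasurable
    (fun t ht => (continuous_const.mul continuous_id).intervalIntegrable 0 t)
    (by filter_upwards [self_mem_ae_restrict measurableSet_Ioi] with s hs
        exact mul_nonneg (by norm_num) (le_of_lt hs))
  have hsq : ∀ ω, (∫ s in (0:ℝ)..W ω, 2 * s) = W ω ^ 2 := by
    intro ω
    rw [intervalIntegral.integral_const_mul, integral_id]
    ring
  simp_rw [hsq] at key
  rw [key]
  calc ∫⁻ s in Ioi (0:ℝ), P {a | s < W a} * ENNReal.ofReal (2 * s)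
      = ∫⁻ s in Ioi (0:ℝ), (ENNReal.ofReal 2 * ENNReal.ofReal (Real.exp (-t)))
          * ENNReal.ofReal (Real.exp (-s) * s) := by
        apply setLIntegral_congr_fun measurableSet_Ioi
        intro s hs
        dsimp only
        rw [htail s hs, ← ENNReal.ofReal_mul (by norm_num : (0:ℝ) ≤ 2),
          ← ENNReal.ofReal_mul (by positivity), ← ENNReal.ofReal_mul (by positivity)]
        rw [neg_add, Real.exp_add]
        ring
    _ = ENNReal.ofReal 2 * ENNReal.ofReal (Real.exp (-t)) := by
        rw [lintegral_const_mul' _ _ (ENNReal.mul_ne_top ENNReal.ofReal_ne_top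
          ENNReal.ofReal_ne_top), s_exp_neg_lint, mul_one]

lemma Wmemℒp (ht : 0 ≤ t) (hWnn : ∀ ω, 0 ≤ W ω) (hW : Measurable W)
    (htail : ∀ s : ℝ, 0 < s → P {ω | s < W ω} = ENNReal.ofReal (Real.exp (-(t + s)))) :
    MemLp W 2 P := by
  rw [memLp_two_iff_integrable_sq hW.aestronglyMeasurable]
  refine ⟨(hW.pow_const 2).aestronglyMeasurable, ?_⟩
  rw [hasFiniteIntegral_iff_ofReal (ae_of_all _ fun ω => sq_nonneg _),
    Wsq_lint P ht hWnn hW htail]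
  exact ENNReal.mul_lt_top ENNReal.ofReal_lt_top ENNReal.ofReal_lt_top

lemma Wvariance (ht : 0 ≤ t) (hWnn : ∀ ω, 0 ≤ W ω) (hW : Measurable W)
    (htail : ∀ s : ℝ, 0 < s → P {ω | s < W ω} = ENNReal.ofReal (Real.exp (-(t + s)))) :
    variance W P ≤ 2 * Real.exp (-t) := by
  refine le_trans (variance_le_expectation_sq hW.aestronglyMeasurable) (le_of_eq ?_)
  have h := Wsq_lint P ht hWnn hW htail
  simp only [Pi.pow_apply]
  rw [integral_eq_lintegral_of_nonneg_ae (ae_of_all _ fun ω => sq_nonneg (W ω))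
    ((hW.pow_const 2).aestronglyMeasurable)]
  rw [h, ← ENNReal.ofReal_mul (by norm_num : (0:ℝ) ≤ 2),
    ENNReal.toReal_ofReal (by positivity)]
end Moments

section Cheb
variable {Ω : Type} [MeasurableSpace Ω] (P : Measure Ω) [IsProbabilityMeasure P]

lemma cheb_sum {Y : ℕ → Ω → ℝ} {n : ℕ} {m v : ℝ}
    (hmem : ∀ i, i < n → MemLp (Y i) 2 P)
    (hpair : ∀ i j, i < n → j < n → i ≠ j → IndepFun (Y i) (Y j) P)
    (hmean : ∀ i, i < n → ∫ ω, Y i ω ∂P = m)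
    (hvar : ∀ i, i < n → variance (Y i) P ≤ v)
    {c : ℝ} (hc : 0 < c) :
    P {ω | c ≤ |(∑ i ∈ Finset.range n, Y i ω) - (n : ℝ) * m|}
      ≤ ENNReal.ofReal ((n : ℝ) * v / c ^ 2) := by
  classical
  have hmem' : ∀ i ∈ Finset.range n, MemLp (Y i) 2 P :=
    fun i hi => hmem i (Finset.mem_range.1 hi)
  have hX : MemLp (∑ i ∈ Finset.range n, Y i) 2 P := memLp_finset_sum' _ hmem'
  have hEX : ∫ ω, (∑ i ∈ Finset.range n, Y i) ω ∂P = (n : ℝ) * m := by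
    simp only [Finset.sum_apply]
    rw [integral_finset_sum _ (fun i hi => (hmem' i hi).integrable one_le_two)]
    rw [Finset.sum_congr rfl (fun i hi => hmean i (Finset.mem_range.1 hi))]
    simp [mul_comm]
  have hVX : variance (∑ i ∈ Finset.range n, Y i) P ≤ (n : ℝ) * v := by
    rw [IndepFun.variance_sum hmem'
      (fun i hi j hj hij => hpair i j (Finset.mem_range.1 hi) (Finset.mem_range.1 hj) hij)]
    calc ∑ i ∈ Finset.range n, variance (Y i) P
        ≤ ∑ _i ∈ Finset.range n, v :=
          Finset.sum_le_sum fun i hi => hvar i (Finset.mem_range.1 hi)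
      _ = (n : ℝ) * v := by simp [mul_comm]
  have hcheb := meas_ge_le_variance_div_sq (μ := P) hX hc
  have hsets : {ω | c ≤ |(∑ i ∈ Finset.range n, Y i ω) - (n : ℝ) * m|}
      = {ω | c ≤ |(∑ i ∈ Finset.range n, Y i) ω - ∫ ω, (∑ i ∈ Finset.range n, Y i) ω ∂P|} := by
    have hEX' := hEX
    simp only [Finset.sum_apply] at hEX'
    ext ω
    simp only [mem_setOf_eq, Finset.sum_apply, hEX']
  rw [hsets]
  refine le_trans hcheb (ENNReal.ofReal_le_ofReal ?_)
  exact div_le_div_of_nonneg_right hVX (by positivity) |>.trans_eq rfl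
end Cheb
section Algebra

lemma Rstat_eq_sum (G : ℝ → ℝ) (n kk : ℕ) (x : ℕ → ℝ) (hk : 1 ≤ kk) :
    Rstat G n kk x = (1/(kk:ℝ)) * ∑ i ∈ Finset.range kk,
      (Real.log (1 - G (orderStat n x (n-kk-1)))
        - Real.log (1 - G (orderStat n x (n-kk+i)))) := by
  have hkk : (kk:ℝ) ≠ 0 := Nat.cast_ne_zero.2 (by omega)
  rw [Rstat, Finset.sum_sub_distrib, Finset.sum_const, Finset.card_range]
  field_simp
  ring

lemma bcomp {G F0 : ℝ → ℝ} {ε x0 : ℝ}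
    (hanti : AntitoneOn (fun x => (1 - G x) ^ (1-ε) / (1 - F0 x)) (Set.Ioi x0))
    (hGlt : ∀ x, G x < 1) (hF0lt : ∀ x, F0 x < 1)
    {a b : ℝ} (hax : x0 < a) (hab : a ≤ b) :
    Real.log (1 - F0 a) - Real.log (1 - F0 b)
      ≤ (1-ε) * (Real.log (1 - G a) - Real.log (1 - G b)) := by
  have hGa : (0:ℝ) < 1 - G a := by linarith [hGlt a]
  have hGb : (0:ℝ) < 1 - G b := by linarith [hGlt b]
  have hFa : (0:ℝ) < 1 - F0 a := by linarith [hF0lt a]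
  have hFb : (0:ℝ) < 1 - F0 b := by linarith [hF0lt b]
  have h := hanti (mem_Ioi.2 hax) (mem_Ioi.2 (lt_of_lt_of_le hax hab)) hab
  simp only at h
  rw [div_le_div_iff₀ hFb hFa] at h
  have hlog := Real.log_le_log (by positivity) h
  rw [Real.log_mul (by positivity) (by positivity),
    Real.log_mul (by positivity) (by positivity),
    Real.log_rpow hGb, Real.log_rpow hGa] at hlog
  nlinarith [hlog]

lemma Rstat_comp {G F0 : ℝ → ℝ} {ε x0 : ℝ}
    (hanti : AntitoneOn (fun x => (1 - G x) ^ (1-ε) / (1 - F0 x)) (Set.Ioi x0))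
    (hGlt : ∀ x, G x < 1) (hF0lt : ∀ x, F0 x < 1) (hε1 : ε < 1)
    {n kk : ℕ} (hk1 : 1 ≤ kk) (hkn : kk < n) {x : ℕ → ℝ}
    (hT : x0 < orderStat n x (n-kk-1)) :
    Rstat F0 n kk x ≤ (1-ε) * Rstat G n kk x := by
  rw [Rstat_eq_sum F0 n kk x hk1, Rstat_eq_sum G n kk x hk1]
  have hterm : ∀ i ∈ Finset.range kk,
      Real.log (1 - F0 (orderStat n x (n-kk-1))) - Real.log (1 - F0 (orderStat n x (n-kk+i)))
        ≤ (1-ε) * (Real.log (1 - G (orderStat n x (n-kk-1)))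
            - Real.log (1 - G (orderStat n x (n-kk+i)))) := by
    intro i hi
    have hi' := Finset.mem_range.1 hi
    exact bcomp hanti hGlt hF0lt hT
      (OSaux.orderStat_mono x (by omega) (by omega))
  calc (1/(kk:ℝ)) * ∑ i ∈ Finset.range kk,
        (Real.log (1 - F0 (orderStat n x (n-kk-1))) - Real.log (1 - F0 (orderStat n x (n-kk+i))))
      ≤ (1/(kk:ℝ)) * ∑ i ∈ Finset.range kk,
          (1-ε) * (Real.log (1 - G (orderStat n x (n-kk-1)))
            - Real.log (1 - G (orderStat n x (n-kk+i)))) :=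
        mul_le_mul_of_nonneg_left (Finset.sum_le_sum hterm) (by positivity)
    _ = (1-ε) * ((1/(kk:ℝ)) * ∑ i ∈ Finset.range kk,
          (Real.log (1 - G (orderStat n x (n-kk-1)))
            - Real.log (1 - G (orderStat n x (n-kk+i))))) := by
        rw [← Finset.mul_sum]
        ring

lemma kR_eq (F : ℝ → ℝ) (hFm : Monotone F) (hFlt : ∀ x, F x < 1)
    {n kk : ℕ} (hk1 : 1 ≤ kk) (hkn : kk < n) (x : ℕ → ℝ) :
    (kk:ℝ) * Rstat F n kk x
      = ∑ i ∈ Finset.range n, max (gfun F (x i) - gfun F (orderStat n x (n-kk-1))) 0 := by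
  have hkk : (kk:ℝ) ≠ 0 := Nat.cast_ne_zero.2 (by omega)
  have hgm := gfun_mono hFm hFlt
  set c := gfun F (orderStat n x (n-kk-1)) with hc
  rw [Rstat_eq_sum F n kk x hk1, ← mul_assoc, mul_one_div, div_self hkk, one_mul]
  have hterm : ∀ i : ℕ, Real.log (1 - F (orderStat n x (n-kk-1)))
      - Real.log (1 - F (orderStat n x (n-kk+i)))
      = gfun F (orderStat n x (n-kk+i)) - c := by
    intro i
    simp only [hc, gfun]
    ring
  rw [Finset.sum_congr rfl (fun i _ => hterm i)]
  rw [← OSaux.sum_orderStat x (fun z => max (gfun F z - c) 0)]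
  have hsplit : Finset.range n = Finset.Ico 0 n := by rw [Finset.range_eq_Ico]
  rw [hsplit, ← Finset.sum_Ico_consecutive _ (Nat.zero_le (n-kk)) (Nat.sub_le n kk)]
  have hfirst : ∑ p ∈ Finset.Ico 0 (n-kk), max (gfun F (orderStat n x p) - c) 0 = 0 := by
    apply Finset.sum_eq_zero
    intro p hp
    have hp' := (Finset.mem_Ico.1 hp).2
    apply max_eq_right
    apply sub_nonpos.2
    exact hgm (OSaux.orderStat_mono x (by omega) (by omega))
  rw [hfirst, zero_add, Finset.sum_Ico_eq_sum_range]
  have hnn : n - (n - kk) = kk := by omega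
  rw [hnn]
  apply Finset.sum_congr rfl
  intro i hi
  have hi' := Finset.mem_range.1 hi
  symm
  apply max_eq_left
  apply sub_nonneg.2
  exact hgm (OSaux.orderStat_mono x (by omega) (by omega))

end Algebra
section Main
variable {Ω : Type} [MeasurableSpace Ω] {P : Measure Ω} [IsProbabilityMeasure P]
  {F : ℝ → ℝ} {X : ℕ → Ω → ℝ}

lemma Tchar (hFm : Monotone F) (hFlt : ∀ x, F x < 1) (x : ℕ → ℝ)
    {n kk : ℕ} (hk1 : 1 ≤ kk) (hkn : kk < n) (t : ℝ) :
    (gfun F (orderStat n x (n-kk-1)) ≤ t ↔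
      ((Finset.range n).filter fun i => t < gfun F (x i)).card ≤ kk) := by
  classical
  have h := OSaux.orderStat_prop_iff x (fun z => gfun F z ≤ t)
      (fun a b hab hb => le_trans (gfun_mono hFm hFlt hab) hb) (show n-kk-1 < n by omega)
  have h' : gfun F (orderStat n x (n-kk-1)) ≤ t ↔
      n - kk - 1 + 1 ≤ ((Finset.range n).filter fun i => gfun F (x i) ≤ t).card := h
  rw [h']
  have hneg : (Finset.range n).filter (fun i => ¬ gfun F (x i) ≤ t)
      = (Finset.range n).filter (fun i => t < gfun F (x i)) := by
    simp [not_le]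
  have hadd := Finset.card_filter_add_card_filter_not
    (s := Finset.range n) (p := fun i => gfun F (x i) ≤ t)
  rw [hneg, Finset.card_range] at hadd
  omega

lemma TcharX (x : ℕ → ℝ) {n kk : ℕ} (hk1 : 1 ≤ kk) (hkn : kk < n) (x0 : ℝ) :
    (orderStat n x (n-kk-1) ≤ x0 ↔
      n - kk ≤ ((Finset.range n).filter fun i => x i ≤ x0).card) := by
  classical
  have h := OSaux.orderStat_prop_iff x (fun z => z ≤ x0)
      (fun a b hab hb => le_trans hab hb) (show n-kk-1 < n by omega)
  have h' : orderStat n x (n-kk-1) ≤ x0 ↔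
      n - kk - 1 + 1 ≤ ((Finset.range n).filter fun i => x i ≤ x0).card := h
  rw [h']
  have heq : n - kk - 1 + 1 = n - kk := by omega
  rw [heq]

lemma main_up (hFc : Continuous F) (hFm : Monotone F) (hFb : Tendsto F atBot (nhds 0))
    (hFt : Tendsto F atTop (nhds 1)) (hFlt : ∀ x, F x < 1)
    (hXm : ∀ i, Measurable (X i)) (hindep : iIndepFun X P)
    (hcdf : ∀ i x, P {ω | X i ω ≤ x} = ENNReal.ofReal (F x))
    {η : ℝ} (hη : 0 < η) (hη1 : η ≤ 1) {n kk : ℕ} (hk1 : 1 ≤ kk)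
    (hkn : (kk:ℝ) * (1+η/2) < n) :
    P {ω | 1+η ≤ Rstat F n kk (fun i => X i ω)}
      ≤ ENNReal.ofReal (18/((kk:ℝ)*η^2)) := by
  classical
  have hkpos : (0:ℝ) < kk := by positivity
  have hkpos' : (0:ℝ) < (kk:ℝ) := hkpos
  have hnpos : (0:ℝ) < n := lt_trans (by nlinarith) hkn
  have hkltn : kk < n := by
    have : (kk:ℝ) < n := lt_of_le_of_lt (by nlinarith) hkn
    exact_mod_cast this
  set t := Real.log ((n:ℝ) / ((kk:ℝ)*(1+η/2))) with ht_def
  have hratio : (1:ℝ) < (n:ℝ)/((kk:ℝ)*(1+η/2)) := (one_lt_div (by positivity)).2 hkn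
  have ht : 0 < t := Real.log_pos hratio
  have hexp : Real.exp (-t) = (kk:ℝ)*(1+η/2)/n := by
    rw [ht_def, ← Real.log_inv, Real.exp_log (by positivity)]
    rw [inv_div]
  have hne : (n:ℝ) * Real.exp (-t) = (kk:ℝ)*(1+η/2) := by
    rw [hexp]; field_simp
  -- the W random variables
  set Wf : ℝ → ℝ := fun z => max (gfun F z - t) 0 with hWf_def
  have hWfm : Measurable Wf :=
    (((gfun_cont hFc hFlt).sub continuous_const).max continuous_const).measurable
  set Y : ℕ → Ω → ℝ := fun i ω => Wf (X i ω) with hY_def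
  have hYm : ∀ i, Measurable (Y i) := fun i => hWfm.comp (hXm i)
  have hYnn : ∀ i ω, 0 ≤ Y i ω := fun i ω => le_max_right _ _
  have hYtail : ∀ i, ∀ s : ℝ, 0 < s →
      P {ω | s < Y i ω} = ENNReal.ofReal (Real.exp (-(t + s))) := by
    intro i s hs
    have hseteq : {ω | s < Y i ω} = {ω | t + s < gfun F (X i ω)} := by
      ext ω
      simp only [hY_def, hWf_def, mem_setOf_eq, lt_max_iff]
      constructor
      · rintro (h | h)
        · linarith
        · linarith
      · intro h; left; linarith
    rw [hseteq]
    exact gtail P hFc hFm hFb hFt hFlt (hXm i) (hcdf i) (by linarith)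
  have hYmean : ∀ i, i < n → ∫ ω, Y i ω ∂P = Real.exp (-t) :=
    fun i _ => Wmean P ht.le (hYnn i) (hYm i) (hYtail i)
  have hYmem : ∀ i, i < n → MemLp (Y i) 2 P :=
    fun i _ => Wmemℒp P ht.le (hYnn i) (hYm i) (hYtail i)
  have hYvar : ∀ i, i < n → variance (Y i) P ≤ 2 * Real.exp (-t) :=
    fun i _ => Wvariance P ht.le (hYnn i) (hYm i) (hYtail i)
  have hYpair : ∀ i j, i < n → j < n → i ≠ j → IndepFun (Y i) (Y j) P :=
    fun i j _ _ hij => (hindep.indepFun hij).comp hWfm hWfm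
  -- the indicator random variables
  set V : ℕ → Ω → ℝ := fun i ω => if t < gfun F (X i ω) then (1:ℝ) else 0 with hV_def
  have hSmeas : ∀ i, MeasurableSet {ω | t < gfun F (X i ω)} :=
    fun i => measurableSet_lt measurable_const ((gfun_cont hFc hFlt).measurable.comp (hXm i))
  have hVind : ∀ i, V i = Set.indicator {ω | t < gfun F (X i ω)} (fun _ => (1:ℝ)) := by
    intro i; funext ω; simp [hV_def, Set.indicator_apply]
  have hVm : ∀ i, Measurable (V i) :=
    fun i => Measurable.ite (hSmeas i) measurable_const measurable_const
  have hVmean : ∀ i, i < n → ∫ ω, V i ω ∂P = Real.exp (-t) := by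
    intro i _
    have : ∫ ω, V i ω ∂P = (P {ω | t < gfun F (X i ω)}).toReal • (1:ℝ) := by
      rw [show (fun ω => V i ω) = V i from rfl, hVind i]
      exact integral_indicator_const (1:ℝ) (hSmeas i)
    rw [this, gtail P hFc hFm hFb hFt hFlt (hXm i) (hcdf i) ht,
      ENNReal.toReal_ofReal (Real.exp_pos _).le, smul_eq_mul, mul_one]
  have hVmem : ∀ i, i < n → MemLp (V i) 2 P := by
    intro i _
    rw [hVind i]
    exact memLp_indicator_const 2 (hSmeas i) 1 (Or.inr (measure_ne_top _ _))
  have hVvar : ∀ i, i < n → variance (V i) P ≤ Real.exp (-t) := by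
    intro i hi
    refine le_trans (variance_le_expectation_sq (hVm i).aestronglyMeasurable) ?_
    have hsq : (V i ^ 2) = V i := by
      funext ω
      simp only [Pi.pow_apply, hV_def]
      split <;> norm_num
    rw [hsq, ← hVmean i hi]
  have hVpair : ∀ i j, i < n → j < n → i ≠ j → IndepFun (V i) (V j) P := by
    intro i j _ _ hij
    have hm : Measurable (fun z : ℝ => if t < gfun F z then (1:ℝ) else 0) :=
      Measurable.ite (measurableSet_lt measurable_const (gfun_cont hFc hFlt).measurable)
        measurable_const measurable_const
    exact (hindep.indepFun hij).comp hm hm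
  have hc : (0:ℝ) < (kk:ℝ)*η/2 := by positivity
  have chebN := cheb_sum P hVmem hVpair hVmean hVvar hc
  have chebS := cheb_sum P hYmem hYpair hYmean hYvar hc
  rw [hne] at chebN
  rw [show (n:ℝ)*(2*Real.exp (-t)) = 2*((n:ℝ)*Real.exp (-t)) by ring, hne] at chebS
  -- event inclusion
  have hincl : {ω | 1+η ≤ Rstat F n kk (fun i => X i ω)}
      ⊆ {ω | (kk:ℝ)*η/2 ≤ |(∑ i ∈ Finset.range n, V i ω) - (kk:ℝ)*(1+η/2)|}
        ∪ {ω | (kk:ℝ)*η/2 ≤ |(∑ i ∈ Finset.range n, Y i ω) - (kk:ℝ)*(1+η/2)|} := by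
    intro ω hω
    simp only [mem_setOf_eq] at hω
    by_cases hA : (kk:ℝ)*η/2 ≤ |(∑ i ∈ Finset.range n, V i ω) - (kk:ℝ)*(1+η/2)|
    · exact Or.inl hA
    right
    push_neg at hA
    set x : ℕ → ℝ := fun i => X i ω with hx_def
    have hVsum : (∑ i ∈ Finset.range n, V i ω)
        = (((Finset.range n).filter fun i => t < gfun F (x i)).card : ℝ) := by
      simp only [hV_def, hx_def]
      rw [Finset.sum_boole]
    have habs := abs_lt.1 hA
    have hcard : (kk:ℝ) < (((Finset.range n).filter fun i => t < gfun F (x i)).card : ℝ) := by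
      rw [hVsum] at habs
      nlinarith [habs.1]
    have hcard' : kk < ((Finset.range n).filter fun i => t < gfun F (x i)).card := by
      exact_mod_cast hcard
    have hT : t < gfun F (orderStat n x (n-kk-1)) := by
      by_contra hTle
      push_neg at hTle
      have := (Tchar hFm hFlt x hk1 hkltn t).1 hTle
      omega
    -- kk * R ≤ sum of Y
    have hkR := kR_eq F hFm hFlt hk1 hkltn x
    have hmax : ∀ i ∈ Finset.range n,
        max (gfun F (x i) - gfun F (orderStat n x (n-kk-1))) 0 ≤ Y i ω := by
      intro i _
      simp only [hY_def, hWf_def]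
      exact max_le_max (by linarith) le_rfl
    have hsum : (kk:ℝ) * Rstat F n kk x ≤ ∑ i ∈ Finset.range n, Y i ω := by
      rw [hkR]; exact Finset.sum_le_sum hmax
    have hlow : (kk:ℝ) * (1+η) ≤ ∑ i ∈ Finset.range n, Y i ω := by
      calc (kk:ℝ) * (1+η) ≤ (kk:ℝ) * Rstat F n kk x :=
            mul_le_mul_of_nonneg_left hω hkpos.le
        _ ≤ _ := hsum
    simp only [mem_setOf_eq]
    rw [abs_of_nonneg (by nlinarith)]
    nlinarith
  calc P {ω | 1+η ≤ Rstat F n kk (fun i => X i ω)}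
      ≤ P ({ω | (kk:ℝ)*η/2 ≤ |(∑ i ∈ Finset.range n, V i ω) - (kk:ℝ)*(1+η/2)|}
          ∪ {ω | (kk:ℝ)*η/2 ≤ |(∑ i ∈ Finset.range n, Y i ω) - (kk:ℝ)*(1+η/2)|}) :=
        measure_mono hincl
    _ ≤ P {ω | (kk:ℝ)*η/2 ≤ |(∑ i ∈ Finset.range n, V i ω) - (kk:ℝ)*(1+η/2)|}
        + P {ω | (kk:ℝ)*η/2 ≤ |(∑ i ∈ Finset.range n, Y i ω) - (kk:ℝ)*(1+η/2)|} :=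
        measure_union_le _ _
    _ ≤ ENNReal.ofReal ((kk:ℝ)*(1+η/2) / ((kk:ℝ)*η/2)^2)
        + ENNReal.ofReal (2*((kk:ℝ)*(1+η/2)) / ((kk:ℝ)*η/2)^2) := add_le_add chebN chebS
    _ ≤ ENNReal.ofReal (6/((kk:ℝ)*η^2)) + ENNReal.ofReal (12/((kk:ℝ)*η^2)) := by
        have h1 : (kk:ℝ)*(1+η/2) / ((kk:ℝ)*η/2)^2 ≤ 6/((kk:ℝ)*η^2) := by
          rw [div_le_div_iff₀ (by positivity) (by positivity)]
          nlinarith [sq_nonneg η, sq_nonneg ((kk:ℝ)*η)]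
        have h2 : 2*((kk:ℝ)*(1+η/2)) / ((kk:ℝ)*η/2)^2 ≤ 12/((kk:ℝ)*η^2) := by
          rw [div_le_div_iff₀ (by positivity) (by positivity)]
          nlinarith [sq_nonneg η, sq_nonneg ((kk:ℝ)*η)]
        exact add_le_add (ENNReal.ofReal_le_ofReal h1) (ENNReal.ofReal_le_ofReal h2)
    _ = ENNReal.ofReal (18/((kk:ℝ)*η^2)) := by
        rw [← ENNReal.ofReal_add (by positivity) (by positivity)]
        congr 1
        rw [← add_div]
        norm_num

lemma main_down (hFc : Continuous F) (hFm : Monotone F) (hFb : Tendsto F atBot (nhds 0))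
    (hFt : Tendsto F atTop (nhds 1)) (hFlt : ∀ x, F x < 1)
    (hXm : ∀ i, Measurable (X i)) (hindep : iIndepFun X P)
    (hcdf : ∀ i x, P {ω | X i ω ≤ x} = ENNReal.ofReal (F x))
    {η : ℝ} (hη : 0 < η) (hη1 : η ≤ 1) {n kk : ℕ} (hk1 : 1 ≤ kk)
    (hkn : (kk:ℝ) * (1+η/2) < n) :
    P {ω | Rstat F n kk (fun i => X i ω) ≤ 1-η}
      ≤ ENNReal.ofReal (18/((kk:ℝ)*η^2)) := by
  classical
  have hkpos : (0:ℝ) < kk := by positivity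
  have hnpos : (0:ℝ) < n := lt_trans (by nlinarith) hkn
  have hkltn : kk < n := by
    have : (kk:ℝ) < n := lt_of_le_of_lt (by nlinarith) hkn
    exact_mod_cast this
  have hhalf : (0:ℝ) < 1 - η/2 := by linarith
  set t := Real.log ((n:ℝ) / ((kk:ℝ)*(1-η/2))) with ht_def
  have hratio : (1:ℝ) < (n:ℝ)/((kk:ℝ)*(1-η/2)) := by
    rw [one_lt_div (by positivity)]
    nlinarith
  have ht : 0 < t := Real.log_pos hratio
  have hexp : Real.exp (-t) = (kk:ℝ)*(1-η/2)/n := by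
    rw [ht_def, ← Real.log_inv, Real.exp_log (by positivity)]
    rw [inv_div]
  have hne : (n:ℝ) * Real.exp (-t) = (kk:ℝ)*(1-η/2) := by
    rw [hexp]; field_simp
  set Wf : ℝ → ℝ := fun z => max (gfun F z - t) 0 with hWf_def
  have hWfm : Measurable Wf :=
    (((gfun_cont hFc hFlt).sub continuous_const).max continuous_const).measurable
  set Y : ℕ → Ω → ℝ := fun i ω => Wf (X i ω) with hY_def
  have hYm : ∀ i, Measurable (Y i) := fun i => hWfm.comp (hXm i)
  have hYnn : ∀ i ω, 0 ≤ Y i ω := fun i ω => le_max_right _ _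
  have hYtail : ∀ i, ∀ s : ℝ, 0 < s →
      P {ω | s < Y i ω} = ENNReal.ofReal (Real.exp (-(t + s))) := by
    intro i s hs
    have hseteq : {ω | s < Y i ω} = {ω | t + s < gfun F (X i ω)} := by
      ext ω
      simp only [hY_def, hWf_def, mem_setOf_eq, lt_max_iff]
      constructor
      · rintro (h | h)
        · linarith
        · linarith
      · intro h; left; linarith
    rw [hseteq]
    exact gtail P hFc hFm hFb hFt hFlt (hXm i) (hcdf i) (by linarith)
  have hYmean : ∀ i, i < n → ∫ ω, Y i ω ∂P = Real.exp (-t) :=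
    fun i _ => Wmean P ht.le (hYnn i) (hYm i) (hYtail i)
  have hYmem : ∀ i, i < n → MemLp (Y i) 2 P :=
    fun i _ => Wmemℒp P ht.le (hYnn i) (hYm i) (hYtail i)
  have hYvar : ∀ i, i < n → variance (Y i) P ≤ 2 * Real.exp (-t) :=
    fun i _ => Wvariance P ht.le (hYnn i) (hYm i) (hYtail i)
  have hYpair : ∀ i j, i < n → j < n → i ≠ j → IndepFun (Y i) (Y j) P :=
    fun i j _ _ hij => (hindep.indepFun hij).comp hWfm hWfm
  set V : ℕ → Ω → ℝ := fun i ω => if t < gfun F (X i ω) then (1:ℝ) else 0 with hV_def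
  have hSmeas : ∀ i, MeasurableSet {ω | t < gfun F (X i ω)} :=
    fun i => measurableSet_lt measurable_const ((gfun_cont hFc hFlt).measurable.comp (hXm i))
  have hVind : ∀ i, V i = Set.indicator {ω | t < gfun F (X i ω)} (fun _ => (1:ℝ)) := by
    intro i; funext ω; simp [hV_def, Set.indicator_apply]
  have hVm : ∀ i, Measurable (V i) :=
    fun i => Measurable.ite (hSmeas i) measurable_const measurable_const
  have hVmean : ∀ i, i < n → ∫ ω, V i ω ∂P = Real.exp (-t) := by
    intro i _
    have : ∫ ω, V i ω ∂P = (P {ω | t < gfun F (X i ω)}).toReal • (1:ℝ) := by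
      rw [show (fun ω => V i ω) = V i from rfl, hVind i]
      exact integral_indicator_const (1:ℝ) (hSmeas i)
    rw [this, gtail P hFc hFm hFb hFt hFlt (hXm i) (hcdf i) ht,
      ENNReal.toReal_ofReal (Real.exp_pos _).le, smul_eq_mul, mul_one]
  have hVmem : ∀ i, i < n → MemLp (V i) 2 P := by
    intro i _
    rw [hVind i]
    exact memLp_indicator_const 2 (hSmeas i) 1 (Or.inr (measure_ne_top _ _))
  have hVvar : ∀ i, i < n → variance (V i) P ≤ Real.exp (-t) := by
    intro i hi
    refine le_trans (variance_le_expectation_sq (hVm i).aestronglyMeasurable) ?_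
    have hsq : (V i ^ 2) = V i := by
      funext ω
      simp only [Pi.pow_apply, hV_def]
      split <;> norm_num
    rw [hsq, ← hVmean i hi]
  have hVpair : ∀ i j, i < n → j < n → i ≠ j → IndepFun (V i) (V j) P := by
    intro i j _ _ hij
    have hm : Measurable (fun z : ℝ => if t < gfun F z then (1:ℝ) else 0) :=
      Measurable.ite (measurableSet_lt measurable_const (gfun_cont hFc hFlt).measurable)
        measurable_const measurable_const
    exact (hindep.indepFun hij).comp hm hm
  have hc : (0:ℝ) < (kk:ℝ)*η/2 := by positivity
  have chebN := cheb_sum P hVmem hVpair hVmean hVvar hc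
  have chebS := cheb_sum P hYmem hYpair hYmean hYvar hc
  rw [hne] at chebN
  rw [show (n:ℝ)*(2*Real.exp (-t)) = 2*((n:ℝ)*Real.exp (-t)) by ring, hne] at chebS
  have hincl : {ω | Rstat F n kk (fun i => X i ω) ≤ 1-η}
      ⊆ {ω | (kk:ℝ)*η/2 ≤ |(∑ i ∈ Finset.range n, V i ω) - (kk:ℝ)*(1-η/2)|}
        ∪ {ω | (kk:ℝ)*η/2 ≤ |(∑ i ∈ Finset.range n, Y i ω) - (kk:ℝ)*(1-η/2)|} := by
    intro ω hω
    simp only [mem_setOf_eq] at hω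
    by_cases hA : (kk:ℝ)*η/2 ≤ |(∑ i ∈ Finset.range n, V i ω) - (kk:ℝ)*(1-η/2)|
    · exact Or.inl hA
    right
    push_neg at hA
    set x : ℕ → ℝ := fun i => X i ω with hx_def
    have hVsum : (∑ i ∈ Finset.range n, V i ω)
        = (((Finset.range n).filter fun i => t < gfun F (x i)).card : ℝ) := by
      simp only [hV_def, hx_def]
      rw [Finset.sum_boole]
    have habs := abs_lt.1 hA
    have hcard : (((Finset.range n).filter fun i => t < gfun F (x i)).card : ℝ) < (kk:ℝ) := by
      rw [hVsum] at habs
      nlinarith [habs.2]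
    have hcard' : ((Finset.range n).filter fun i => t < gfun F (x i)).card ≤ kk := by
      have : ((Finset.range n).filter fun i => t < gfun F (x i)).card < kk := by
        exact_mod_cast hcard
      omega
    have hT : gfun F (orderStat n x (n-kk-1)) ≤ t :=
      (Tchar hFm hFlt x hk1 hkltn t).2 hcard'
    have hkR := kR_eq F hFm hFlt hk1 hkltn x
    have hmax : ∀ i ∈ Finset.range n,
        Y i ω ≤ max (gfun F (x i) - gfun F (orderStat n x (n-kk-1))) 0 := by
      intro i _
      simp only [hY_def, hWf_def]
      exact max_le_max (by linarith) le_rfl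
    have hsum : (∑ i ∈ Finset.range n, Y i ω) ≤ (kk:ℝ) * Rstat F n kk x := by
      rw [hkR]; exact Finset.sum_le_sum hmax
    have hup : (∑ i ∈ Finset.range n, Y i ω) ≤ (kk:ℝ) * (1-η) := by
      calc (∑ i ∈ Finset.range n, Y i ω) ≤ (kk:ℝ) * Rstat F n kk x := hsum
        _ ≤ (kk:ℝ) * (1-η) := mul_le_mul_of_nonneg_left hω hkpos.le
    simp only [mem_setOf_eq]
    refine le_abs.2 (Or.inr ?_)
    nlinarith
  calc P {ω | Rstat F n kk (fun i => X i ω) ≤ 1-η}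
      ≤ P ({ω | (kk:ℝ)*η/2 ≤ |(∑ i ∈ Finset.range n, V i ω) - (kk:ℝ)*(1-η/2)|}
          ∪ {ω | (kk:ℝ)*η/2 ≤ |(∑ i ∈ Finset.range n, Y i ω) - (kk:ℝ)*(1-η/2)|}) :=
        measure_mono hincl
    _ ≤ P {ω | (kk:ℝ)*η/2 ≤ |(∑ i ∈ Finset.range n, V i ω) - (kk:ℝ)*(1-η/2)|}
        + P {ω | (kk:ℝ)*η/2 ≤ |(∑ i ∈ Finset.range n, Y i ω) - (kk:ℝ)*(1-η/2)|} :=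
        measure_union_le _ _
    _ ≤ ENNReal.ofReal ((kk:ℝ)*(1-η/2) / ((kk:ℝ)*η/2)^2)
        + ENNReal.ofReal (2*((kk:ℝ)*(1-η/2)) / ((kk:ℝ)*η/2)^2) := add_le_add chebN chebS
    _ ≤ ENNReal.ofReal (6/((kk:ℝ)*η^2)) + ENNReal.ofReal (12/((kk:ℝ)*η^2)) := by
        have h1 : (kk:ℝ)*(1-η/2) / ((kk:ℝ)*η/2)^2 ≤ 6/((kk:ℝ)*η^2) := by
          rw [div_le_div_iff₀ (by positivity) (by positivity)]
          nlinarith [sq_nonneg η, sq_nonneg ((kk:ℝ)*η)]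
        have h2 : 2*((kk:ℝ)*(1-η/2)) / ((kk:ℝ)*η/2)^2 ≤ 12/((kk:ℝ)*η^2) := by
          rw [div_le_div_iff₀ (by positivity) (by positivity)]
          nlinarith [sq_nonneg η, sq_nonneg ((kk:ℝ)*η)]
        exact add_le_add (ENNReal.ofReal_le_ofReal h1) (ENNReal.ofReal_le_ofReal h2)
    _ = ENNReal.ofReal (18/((kk:ℝ)*η^2)) := by
        rw [← ENNReal.ofReal_add (by positivity) (by positivity)]
        congr 1
        rw [← add_div]
        norm_num

lemma tailcount (hFm : Monotone F) (hFb : Tendsto F atBot (nhds 0))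
    (hXm : ∀ i, Measurable (X i)) (hindep : iIndepFun X P)
    (hcdf : ∀ i x, P {ω | X i ω ≤ x} = ENNReal.ofReal (F x))
    {x0 : ℝ} (hp : F x0 < 1) {n kk : ℕ} (hk1 : 1 ≤ kk) (hkltn : kk < n)
    (hsmall : (kk:ℝ) ≤ (n:ℝ)*(1-F x0)/2) :
    P {ω | orderStat n (fun i => X i ω) (n-kk-1) ≤ x0}
      ≤ ENNReal.ofReal (4/((n:ℝ)*(1-F x0)^2)) := by
  classical
  set p := F x0 with hp_def
  have hnpos : (0:ℝ) < n := by
    have : (0:ℕ) < n := by omega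
    exact_mod_cast this
  have hppos : 0 ≤ p := F_nonneg hFm hFb x0
  have h1p : (0:ℝ) < 1 - p := by linarith
  set M : ℕ → Ω → ℝ := fun i ω => if X i ω ≤ x0 then (1:ℝ) else 0 with hM_def
  have hSmeas : ∀ i, MeasurableSet {ω | X i ω ≤ x0} := fun i => (hXm i) measurableSet_Iic
  have hMind : ∀ i, M i = Set.indicator {ω | X i ω ≤ x0} (fun _ => (1:ℝ)) := by
    intro i; funext ω; simp [hM_def, Set.indicator_apply]
  have hMm : ∀ i, Measurable (M i) :=
    fun i => Measurable.ite (hSmeas i) measurable_const measurable_const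
  have hMmean : ∀ i, i < n → ∫ ω, M i ω ∂P = p := by
    intro i _
    have : ∫ ω, M i ω ∂P = (P {ω | X i ω ≤ x0}).toReal • (1:ℝ) := by
      rw [show (fun ω => M i ω) = M i from rfl, hMind i]
      exact integral_indicator_const (1:ℝ) (hSmeas i)
    rw [this, hcdf i x0, ENNReal.toReal_ofReal hppos, smul_eq_mul, mul_one]
  have hMmem : ∀ i, i < n → MemLp (M i) 2 P := by
    intro i _
    rw [hMind i]
    exact memLp_indicator_const 2 (hSmeas i) 1 (Or.inr (measure_ne_top _ _))
  have hMvar : ∀ i, i < n → variance (M i) P ≤ 1 := by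
    intro i hi
    refine le_trans (variance_le_expectation_sq (hMm i).aestronglyMeasurable) ?_
    have hsq : (M i ^ 2) = M i := by
      funext ω
      simp only [Pi.pow_apply, hM_def]
      split <;> norm_num
    rw [hsq]
    have := hMmean i hi
    rw [show (∫ ω, (M i) ω ∂P) = ∫ ω, M i ω ∂P from rfl, this]
    linarith
  have hMpair : ∀ i j, i < n → j < n → i ≠ j → IndepFun (M i) (M j) P := by
    intro i j _ _ hij
    have hm : Measurable (fun z : ℝ => if z ≤ x0 then (1:ℝ) else 0) :=
      Measurable.ite measurableSet_Iic measurable_const measurable_const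
    exact (hindep.indepFun hij).comp hm hm
  have hc : (0:ℝ) < (n:ℝ)*(1-p)/2 := by positivity
  have cheb := cheb_sum P hMmem hMpair hMmean hMvar hc
  have hincl : {ω | orderStat n (fun i => X i ω) (n-kk-1) ≤ x0}
      ⊆ {ω | (n:ℝ)*(1-p)/2 ≤ |(∑ i ∈ Finset.range n, M i ω) - (n:ℝ)*p|} := by
    intro ω hω
    simp only [mem_setOf_eq] at hω ⊢
    set x : ℕ → ℝ := fun i => X i ω with hx_def
    have hcard := (TcharX x hk1 hkltn x0).1 hω
    have hMsum : (∑ i ∈ Finset.range n, M i ω)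
        = (((Finset.range n).filter fun i => x i ≤ x0).card : ℝ) := by
      simp only [hM_def, hx_def]
      rw [Finset.sum_boole]
    have hge : ((n:ℝ) - (kk:ℝ)) ≤ (∑ i ∈ Finset.range n, M i ω) := by
      rw [hMsum]
      have : ((n - kk : ℕ) : ℝ) ≤ (((Finset.range n).filter fun i => x i ≤ x0).card : ℝ) := by
        exact_mod_cast hcard
      rwa [Nat.cast_sub hkltn.le] at this
    have : (n:ℝ)*(1-p)/2 ≤ (∑ i ∈ Finset.range n, M i ω) - (n:ℝ)*p := by nlinarith
    exact le_abs.2 (Or.inl this)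
  calc P {ω | orderStat n (fun i => X i ω) (n-kk-1) ≤ x0}
      ≤ P {ω | (n:ℝ)*(1-p)/2 ≤ |(∑ i ∈ Finset.range n, M i ω) - (n:ℝ)*p|} :=
        measure_mono hincl
    _ ≤ ENNReal.ofReal ((n:ℝ)*1/((n:ℝ)*(1-p)/2)^2) := cheb
    _ ≤ ENNReal.ofReal (4/((n:ℝ)*(1-p)^2)) := by
        apply ENNReal.ofReal_le_ofReal
        rw [div_le_div_iff₀ (by positivity) (by positivity)]
        nlinarith [sq_nonneg ((n:ℝ)*(1-p))]
end Main
section Final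

lemma sqrt_k_atTop {k : ℕ → ℕ} (hk : Tendsto k atTop atTop) :
    Tendsto (fun n => Real.sqrt (k n)) atTop atTop := by
  have h : Tendsto (fun n => ((k n : ℝ))) atTop atTop :=
    tendsto_natCast_atTop_atTop.comp hk
  have h2 := (tendsto_rpow_atTop (y := 1/2) (by norm_num)).comp h
  refine h2.congr fun n => ?_
  simp only [Function.comp_apply]
  exact (Real.sqrt_eq_rpow _).symm

lemma bound_tendsto_zero {k : ℕ → ℕ} (hk : Tendsto k atTop atTop)
    {c1 c2 d : ℝ} (hd : 0 < d) :
    Tendsto (fun n : ℕ => ENNReal.ofReal (c1/((n:ℝ)*d)) + ENNReal.ofReal (c2/((k n:ℝ)*d)))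
      atTop (nhds 0) := by
  have hnc : Tendsto (fun n : ℕ => (n:ℝ)) atTop atTop := tendsto_natCast_atTop_atTop
  have hkc : Tendsto (fun n : ℕ => (k n:ℝ)) atTop atTop := tendsto_natCast_atTop_atTop.comp hk
  have h1 : Tendsto (fun n : ℕ => c1/((n:ℝ)*d)) atTop (nhds 0) :=
    tendsto_const_nhds.div_atTop (hnc.atTop_mul_const hd)
  have h2 : Tendsto (fun n : ℕ => c2/((k n:ℝ)*d)) atTop (nhds 0) :=
    tendsto_const_nhds.div_atTop (hkc.atTop_mul_const hd)
  have := (ENNReal.tendsto_ofReal h1).add (ENNReal.tendsto_ofReal h2)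
  simpa using this

lemma partA {F F0 : ℝ → ℝ}
    (hFc : Continuous F) (hFm : Monotone F) (hFb : Tendsto F atBot (nhds 0))
    (hFt : Tendsto F atTop (nhds 1)) (hFlt : ∀ x, F x < 1)
    (hF0lt : ∀ x, F0 x < 1) (hB : BCondition F F0) (u : ℝ)
    {Ω : Type} [MeasurableSpace Ω] (P : Measure Ω) [IsProbabilityMeasure P]
    (X : ℕ → Ω → ℝ) (hXm : ∀ i, Measurable (X i))
    (hindep : iIndepFun X P)
    (hcdf : ∀ i x, P {ω | X i ω ≤ x} = ENNReal.ofReal (F x))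
    (k : ℕ → ℕ) (hk : Tendsto k atTop atTop)
    (hkn : Tendsto (fun n => (k n : ℝ)/n) atTop (nhds 0)) :
    Tendsto (fun n => P {ω | 1 + u / Real.sqrt (k n) < Rstat F0 n (k n) (fun i => X i ω)})
      atTop (nhds 0) := by
  classical
  obtain ⟨ε, x0, hε, hε1, hanti⟩ := hB
  have h1ε : (0:ℝ) < 1 - ε := by linarith
  set η : ℝ := min 1 (ε/(2*(1-ε))) with hη_def
  have hη : 0 < η := lt_min one_pos (by positivity)
  have hη1 : η ≤ 1 := min_le_left _ _
  have hηε : (1-ε)*(1+η) ≤ 1-ε/2 := by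
    have h2 : η ≤ ε/(2*(1-ε)) := min_le_right _ _
    have h3 : (1-ε)*η ≤ ε/2 := by
      calc (1-ε)*η ≤ (1-ε)*(ε/(2*(1-ε))) := mul_le_mul_of_nonneg_left h2 h1ε.le
        _ = ε/2 := by field_simp
    nlinarith [h3]
  set p := F x0 with hp_def
  have hp : p < 1 := hFlt x0
  have h1p : (0:ℝ) < 1 - p := by linarith
  set c0 : ℝ := min ((1/(1+η/2))/2) ((1-p)/4) with hc0_def
  have hc0 : 0 < c0 := lt_min (by positivity) (by positivity)
  have e1 : ∀ᶠ n in atTop, 1 ≤ k n := hk.eventually_ge_atTop 1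
  have e2 : ∀ᶠ n in atTop, (k n : ℝ)/n < c0 := hkn.eventually_lt_const hc0
  have e3 : ∀ᶠ n : ℕ in atTop, 1 ≤ n := eventually_ge_atTop 1
  have hquot : Tendsto (fun n => u / Real.sqrt (k n)) atTop (nhds 0) :=
    tendsto_const_nhds.div_atTop (sqrt_k_atTop hk)
  have e4 : ∀ᶠ n in atTop, -(ε/2) < u / Real.sqrt (k n) :=
    hquot.eventually_const_lt (by linarith)
  have hbound : ∀ᶠ n in atTop,
      P {ω | 1 + u / Real.sqrt (k n) < Rstat F0 n (k n) (fun i => X i ω)}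
        ≤ ENNReal.ofReal (4/((n:ℝ)*(1-p)^2)) + ENNReal.ofReal (18/((k n:ℝ)*η^2)) := by
    filter_upwards [e1, e2, e3, e4] with n h1 h2 h3 h4
    set kk := k n with hkk_def
    have hkpos : (0:ℝ) < kk := by exact_mod_cast h1
    have hnpos : (0:ℝ) < n := by exact_mod_cast h3
    have hkcn : (kk:ℝ) < c0 * n := by
      rw [div_lt_iff₀ hnpos] at h2
      exact h2
    have hA : (kk:ℝ)*(1+η/2) < n := by
      have hc0le : c0 ≤ (1/(1+η/2))/2 := min_le_left _ _
      have h5 : (kk:ℝ)*(1+η/2) < c0*(1+η/2)*n := by nlinarith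
      have h6 : c0*(1+η/2) ≤ 1/2 := by
        have : (0:ℝ) < 1+η/2 := by linarith
        calc c0*(1+η/2) ≤ ((1/(1+η/2))/2)*(1+η/2) := by nlinarith
          _ = 1/2 := by field_simp
      nlinarith
    have hB' : (kk:ℝ) ≤ (n:ℝ)*(1-p)/2 := by
      have hc0le : c0 ≤ (1-p)/4 := min_le_right _ _
      nlinarith
    have hkltn : kk < n := by
      have : (kk:ℝ) < n := by nlinarith
      exact_mod_cast this
    have hincl : {ω | 1 + u / Real.sqrt kk < Rstat F0 n kk (fun i => X i ω)}
        ⊆ {ω | orderStat n (fun i => X i ω) (n-kk-1) ≤ x0}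
          ∪ {ω | 1+η ≤ Rstat F n kk (fun i => X i ω)} := by
      intro ω hω
      simp only [mem_setOf_eq] at hω
      by_cases hT : orderStat n (fun i => X i ω) (n-kk-1) ≤ x0
      · exact Or.inl hT
      push_neg at hT
      right
      simp only [mem_setOf_eq]
      have hcomp := Rstat_comp hanti hFlt hF0lt hε1 h1 hkltn hT
      have hge : 1 - ε/2 ≤ 1 + u / Real.sqrt kk := by linarith
      have hstep : (1-ε)*(1+η) < (1-ε) * Rstat F n kk (fun i => X i ω) := by
        calc (1-ε)*(1+η) ≤ 1-ε/2 := hηε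
          _ ≤ 1 + u / Real.sqrt kk := hge
          _ < Rstat F0 n kk (fun i => X i ω) := hω
          _ ≤ (1-ε) * Rstat F n kk (fun i => X i ω) := hcomp
      have := (mul_lt_mul_iff_right₀ h1ε).1 hstep
      linarith
    calc P {ω | 1 + u / Real.sqrt kk < Rstat F0 n kk (fun i => X i ω)}
        ≤ P ({ω | orderStat n (fun i => X i ω) (n-kk-1) ≤ x0}
            ∪ {ω | 1+η ≤ Rstat F n kk (fun i => X i ω)}) := measure_mono hincl
      _ ≤ P {ω | orderStat n (fun i => X i ω) (n-kk-1) ≤ x0}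
          + P {ω | 1+η ≤ Rstat F n kk (fun i => X i ω)} := measure_union_le _ _
      _ ≤ ENNReal.ofReal (4/((n:ℝ)*(1-p)^2)) + ENNReal.ofReal (18/((kk:ℝ)*η^2)) :=
          add_le_add
            (tailcount hFm hFb hXm hindep hcdf hp h1 hkltn hB')
            (main_up hFc hFm hFb hFt hFlt hXm hindep hcdf hη hη1 h1 hA)
  have hb0 : Tendsto (fun n : ℕ => ENNReal.ofReal (4/((n:ℝ)*(1-p)^2))
      + ENNReal.ofReal (18/((k n:ℝ)*η^2))) atTop (nhds 0) := by
    have ha := bound_tendsto_zero hk (c1 := (4:ℝ)) (c2 := 0) (d := (1-p)^2) (by positivity)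
    have hb := bound_tendsto_zero hk (c1 := (0:ℝ)) (c2 := 18) (d := η^2) (by positivity)
    have := ha.add hb
    simp only [zero_div, ENNReal.ofReal_zero, add_zero, zero_add] at this ⊢
    simpa using this
  refine tendsto_of_tendsto_of_tendsto_of_le_of_le' tendsto_const_nhds hb0 ?_ hbound
  exact Eventually.of_forall fun n => zero_le

lemma partB {H F0 : ℝ → ℝ}
    (hHc : Continuous H) (hHm : Monotone H) (hHb : Tendsto H atBot (nhds 0))
    (hHt : Tendsto H atTop (nhds 1)) (hHlt : ∀ x, H x < 1)
    (hF0lt : ∀ x, F0 x < 1) (hB : BCondition F0 H) (u : ℝ)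
    {Ω : Type} [MeasurableSpace Ω] (P : Measure Ω) [IsProbabilityMeasure P]
    (X : ℕ → Ω → ℝ) (hXm : ∀ i, Measurable (X i))
    (hindep : iIndepFun X P)
    (hcdf : ∀ i x, P {ω | X i ω ≤ x} = ENNReal.ofReal (H x))
    (k : ℕ → ℕ) (hk : Tendsto k atTop atTop)
    (hkn : Tendsto (fun n => (k n : ℝ)/n) atTop (nhds 0)) :
    Tendsto (fun n => P {ω | 1 + u / Real.sqrt (k n) < Rstat F0 n (k n) (fun i => X i ω)})
      atTop (nhds 1) := by
  classical
  obtain ⟨ε, x0, hε, hε1, hanti⟩ := hB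
  have h1ε : (0:ℝ) < 1 - ε := by linarith
  set η : ℝ := ε/2 with hη_def
  have hη : 0 < η := by positivity
  have hη1 : η ≤ 1 := by rw [hη_def]; linarith
  set p := H x0 with hp_def
  have hp : p < 1 := hHlt x0
  have h1p : (0:ℝ) < 1 - p := by linarith
  set c0 : ℝ := min ((1/(1+η/2))/2) ((1-p)/4) with hc0_def
  have hc0 : 0 < c0 := lt_min (by positivity) (by positivity)
  have e1 : ∀ᶠ n in atTop, 1 ≤ k n := hk.eventually_ge_atTop 1
  have e2 : ∀ᶠ n in atTop, (k n : ℝ)/n < c0 := hkn.eventually_lt_const hc0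
  have e3 : ∀ᶠ n : ℕ in atTop, 1 ≤ n := eventually_ge_atTop 1
  have hquot : Tendsto (fun n => u / Real.sqrt (k n)) atTop (nhds 0) :=
    tendsto_const_nhds.div_atTop (sqrt_k_atTop hk)
  have hδ0 : (0:ℝ) < (ε/2)/(1-ε) := by positivity
  have e4 : ∀ᶠ n in atTop, u / Real.sqrt (k n) < (ε/2)/(1-ε) :=
    hquot.eventually_lt_const hδ0
  have hbound : ∀ᶠ n in atTop,
      P ({ω | 1 + u / Real.sqrt (k n) < Rstat F0 n (k n) (fun i => X i ω)}ᶜ)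
        ≤ ENNReal.ofReal (4/((n:ℝ)*(1-p)^2)) + ENNReal.ofReal (18/((k n:ℝ)*η^2)) := by
    filter_upwards [e1, e2, e3, e4] with n h1 h2 h3 h4
    set kk := k n with hkk_def
    have hkpos : (0:ℝ) < kk := by exact_mod_cast h1
    have hnpos : (0:ℝ) < n := by exact_mod_cast h3
    have hkcn : (kk:ℝ) < c0 * n := by
      rw [div_lt_iff₀ hnpos] at h2
      exact h2
    have hA : (kk:ℝ)*(1+η/2) < n := by
      have hc0le : c0 ≤ (1/(1+η/2))/2 := min_le_left _ _
      have h5 : (kk:ℝ)*(1+η/2) < c0*(1+η/2)*n := by nlinarith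
      have h6 : c0*(1+η/2) ≤ 1/2 := by
        have : (0:ℝ) < 1+η/2 := by linarith
        calc c0*(1+η/2) ≤ ((1/(1+η/2))/2)*(1+η/2) := by nlinarith
          _ = 1/2 := by field_simp
      nlinarith
    have hB' : (kk:ℝ) ≤ (n:ℝ)*(1-p)/2 := by
      have hc0le : c0 ≤ (1-p)/4 := min_le_right _ _
      nlinarith
    have hkltn : kk < n := by
      have : (kk:ℝ) < n := by nlinarith
      exact_mod_cast this
    have hincl : ({ω | 1 + u / Real.sqrt kk < Rstat F0 n kk (fun i => X i ω)}ᶜ)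
        ⊆ {ω | orderStat n (fun i => X i ω) (n-kk-1) ≤ x0}
          ∪ {ω | Rstat H n kk (fun i => X i ω) ≤ 1-η} := by
      intro ω hω
      simp only [mem_compl_iff, mem_setOf_eq, not_lt] at hω
      by_cases hT : orderStat n (fun i => X i ω) (n-kk-1) ≤ x0
      · exact Or.inl hT
      push_neg at hT
      right
      simp only [mem_setOf_eq]
      have hcomp := Rstat_comp hanti hF0lt hHlt hε1 h1 hkltn hT
      calc Rstat H n kk (fun i => X i ω) ≤ (1-ε) * Rstat F0 n kk (fun i => X i ω) := hcomp
        _ ≤ (1-ε) * (1 + u / Real.sqrt kk) := mul_le_mul_of_nonneg_left hω h1ε.le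
        _ ≤ 1-η := by
            have := mul_lt_mul_of_pos_left h4 h1ε
            have heq : (1-ε)*((ε/2)/(1-ε)) = ε/2 := by field_simp
            rw [hη_def]
            nlinarith
    calc P ({ω | 1 + u / Real.sqrt kk < Rstat F0 n kk (fun i => X i ω)}ᶜ)
        ≤ P ({ω | orderStat n (fun i => X i ω) (n-kk-1) ≤ x0}
            ∪ {ω | Rstat H n kk (fun i => X i ω) ≤ 1-η}) := measure_mono hincl
      _ ≤ P {ω | orderStat n (fun i => X i ω) (n-kk-1) ≤ x0}
          + P {ω | Rstat H n kk (fun i => X i ω) ≤ 1-η} := measure_union_le _ _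
      _ ≤ ENNReal.ofReal (4/((n:ℝ)*(1-p)^2)) + ENNReal.ofReal (18/((kk:ℝ)*η^2)) :=
          add_le_add
            (tailcount hHm hHb hXm hindep hcdf hp h1 hkltn hB')
            (main_down hHc hHm hHb hHt hHlt hXm hindep hcdf hη hη1 h1 hA)
  have hb0 : Tendsto (fun n : ℕ => ENNReal.ofReal (4/((n:ℝ)*(1-p)^2))
      + ENNReal.ofReal (18/((k n:ℝ)*η^2))) atTop (nhds 0) := by
    have ha := bound_tendsto_zero hk (c1 := (4:ℝ)) (c2 := 0) (d := (1-p)^2) (by positivity)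
    have hb := bound_tendsto_zero hk (c1 := (0:ℝ)) (c2 := 18) (d := η^2) (by positivity)
    have := ha.add hb
    simp only [zero_div, ENNReal.ofReal_zero, add_zero, zero_add] at this ⊢
    simpa using this
  -- squeeze to 1
  have hlow : Tendsto (fun n : ℕ => 1 - (ENNReal.ofReal (4/((n:ℝ)*(1-p)^2))
      + ENNReal.ofReal (18/((k n:ℝ)*η^2)))) atTop (nhds 1) := by
    have := ENNReal.Tendsto.sub
      (tendsto_const_nhds : Tendsto (fun _ : ℕ => (1:ENNReal)) atTop (nhds 1)) hb0
      (Or.inl ENNReal.one_ne_top)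
    simpa using this
  refine tendsto_of_tendsto_of_tendsto_of_le_of_le' hlow tendsto_const_nhds ?_
    (Eventually.of_forall fun n => prob_le_one)
  filter_upwards [hbound] with n hb
  set E := {ω | 1 + u / Real.sqrt (k n) < Rstat F0 n (k n) (fun i => X i ω)} with hE_def
  have h1 : (1:ENNReal) ≤ P E + P Eᶜ := by
    calc (1:ENNReal) = P univ := measure_univ.symm
      _ = P (E ∪ Eᶜ) := by rw [Set.union_compl_self]
      _ ≤ P E + P Eᶜ := measure_union_le _ _
  exact tsub_le_iff_right.2 (le_trans h1 (add_le_add_right hb _))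
end Final

/-- Corollary 1. Let `A₀`, `A₁` be two classes of continuous distribution
functions with `x* = +∞` separated by a continuous distribution function `F₀` with
`x*_{F₀} = +∞`, i.e. `B(G, F₀)` for all `G ∈ A₀` and `B(F₀, H)` for all `H ∈ A₁`.
For the test rejecting `H̃₀ : F ∈ A₀` when `R_{k,n} > 1 + u_{1-α}/√k`, if `k = k(n) → ∞` and
`k/n → 0`, then (a) for every `F ∈ A₀` the rejection probability tends to `0` (in particular the
test has asymptotic significance level `α`), and (b) for every `F ∈ A₁` the rejection probability
tends to `1` (the test is consistent). -/
theorem test_significance_and_consistency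
    (A0 A1 : Set (ℝ → ℝ))
    (hA0 : ∀ G ∈ A0, Continuous G ∧ Monotone G ∧ Tendsto G atBot (nhds 0) ∧
      Tendsto G atTop (nhds 1) ∧ ∀ x, G x < 1)
    (hA1 : ∀ H ∈ A1, Continuous H ∧ Monotone H ∧ Tendsto H atBot (nhds 0) ∧
      Tendsto H atTop (nhds 1) ∧ ∀ x, H x < 1)
    (F0 : ℝ → ℝ) (hF0cont : Continuous F0) (hF0mono : Monotone F0)
    (hF0bot : Tendsto F0 atBot (nhds 0)) (hF0top : Tendsto F0 atTop (nhds 1))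
    (hF0lt : ∀ x, F0 x < 1)
    (hsep0 : ∀ G ∈ A0, BCondition G F0) (hsep1 : ∀ H ∈ A1, BCondition F0 H)
    (α : ℝ) (hα : 0 < α) (hα1 : α < 1)
    (u : ℝ) (hu : gaussianReal 0 1 (Set.Iic u) = ENNReal.ofReal (1 - α))
    (k : ℕ → ℕ) (hk : Tendsto k atTop atTop)
    (hkn : Tendsto (fun n => (k n : ℝ) / n) atTop (nhds 0)) :
    (∀ F ∈ A0, ∀ (Ω : Type) (_ : MeasurableSpace Ω) (P : Measure Ω), IsProbabilityMeasure P →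
      ∀ (X : ℕ → Ω → ℝ), (∀ i, Measurable (X i)) →
        iIndepFun X P →
        (∀ i x, P {ω | X i ω ≤ x} = ENNReal.ofReal (F x)) →
        Tendsto
          (fun n => P {ω | 1 + u / Real.sqrt (k n) < Rstat F0 n (k n) (fun i => X i ω)})
          atTop (nhds 0)) ∧
    (∀ F ∈ A1, ∀ (Ω : Type) (_ : MeasurableSpace Ω) (P : Measure Ω), IsProbabilityMeasure P →
      ∀ (X : ℕ → Ω → ℝ), (∀ i, Measurable (X i)) →
        iIndepFun X P →
        (∀ i x, P {ω | X i ω ≤ x} = ENNReal.ofReal (F x)) →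
        Tendsto
          (fun n => P {ω | 1 + u / Real.sqrt (k n) < Rstat F0 n (k n) (fun i => X i ω)})
          atTop (nhds 1)) := by
  constructor
  · intro F hF Ω _ P hP X hXm hindep hcdf
    obtain ⟨hFc, hFm, hFb, hFt, hFlt⟩ := hA0 F hF
    haveI := hP
    exact partA hFc hFm hFb hFt hFlt hF0lt (hsep0 F hF) u P X hXm hindep hcdf k hk hkn
  · intro F hF Ω _ P hP X hXm hindep hcdf
    obtain ⟨hHc, hHm, hHb, hHt, hHlt⟩ := hA1 F hF
    haveI := hP
    exact partB hHc hHm hHb hHt hHlt hF0lt (hsep1 F hF) u P X hXm hindep hcdf k hk hkn
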